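/- Let p be a prime and n ≥ 1. If integers a_0, a_1, ..., a_{p^n - 1} satisfy ∑_{j=0}^{p^n-1} a_j ω^j = 0 where ω = e^{2πi/p^n}, then for every 0 ≤ i ≤ p^{n-1} - 1 and every 0 ≤ j ≤ p-1, a_i = a_{i + j p^{n-1}}. -/

import Mathlib

open Polynomial Finset

/-- If integers `a_0, ..., a_{p^n-1}` satisfy `∑ a_j ω^j = 0` with `ω = e^{2πi/p^n}`,
then `a_i = a_{i + j p^{n-1}}` for all `0 ≤ i ≤ p^{n-1}-1` and `0 ≤ j ≤ p-1`. -/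
theorem stmt0 (p : ℕ) (hp : p.Prime) (n : ℕ) (hn : 1 ≤ n) (a : ℕ → ℤ)
    (h : ∑ j ∈ Finset.range (p ^ n),
        (a j : ℂ) * Complex.exp (2 * Real.pi * Complex.I * j / (p ^ n : ℕ)) = 0) :
    ∀ i < p ^ (n - 1), ∀ j < p, a i = a (i + j * p ^ (n - 1)) := by
  set m := p ^ (n - 1) with hm
  have hp2 := hp.two_le
  have hpn : p ^ n = m * p := by
    rw [hm, ← pow_succ]; congr 1; omega
  have hmpos : 0 < m := Nat.pow_pos (by omega)
  have hNpos : 0 < p ^ n := Nat.pow_pos (by omega)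
  set ζ : ℂ := Complex.exp (2 * Real.pi * Complex.I / (p ^ n : ℕ)) with hζ
  have hprim : IsPrimitiveRoot ζ (p ^ n) := Complex.isPrimitiveRoot_exp _ hNpos.ne'
  have hexp : ∀ j : ℕ, Complex.exp (2 * Real.pi * Complex.I * j / (p ^ n : ℕ)) = ζ ^ j := by
    intro j
    rw [hζ, ← Complex.exp_nat_mul]
    congr 1
    ring
  set P : ℤ[X] := ∑ j ∈ Finset.range (p ^ n), C (a j) * X ^ j with hP
  have hcoeff : ∀ k, k < p ^ n → P.coeff k = a k := by
    intro k hk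
    rw [hP, finset_sum_coeff]
    simp only [coeff_C_mul, coeff_X_pow, mul_ite, mul_one, mul_zero]
    rw [Finset.sum_ite_eq (Finset.range (p ^ n)) k a]
    simp [hk]
  have haev : Polynomial.aeval ζ P = 0 := by
    rw [hP, map_sum, ← h]
    refine Finset.sum_congr rfl fun j hj => ?_
    rw [hexp j, map_mul, aeval_C, map_pow, aeval_X]
    rfl
  have hmin : Polynomial.cyclotomic (p ^ n) ℤ = minpoly ℤ ζ :=
    Polynomial.cyclotomic_eq_minpoly hprim hNpos
  have hdvd : Polynomial.cyclotomic (p ^ n) ℤ ∣ P := by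
    rw [hmin]
    exact minpoly.isIntegrallyClosed_dvd (hprim.isIntegral hNpos) haev
  obtain ⟨Q, hPQ⟩ := hdvd
  have hcyc : Polynomial.cyclotomic (p ^ n) ℤ = ∑ l ∈ Finset.range p, (X : ℤ[X]) ^ (m * l) := by
    obtain ⟨n', rfl⟩ : ∃ n', n = n' + 1 := ⟨n - 1, by omega⟩
    rw [Polynomial.cyclotomic_prime_pow_eq_geom_sum hp]
    have hmn : m = p ^ n' := by rw [hm, Nat.add_sub_cancel]
    rw [hmn]
    exact Finset.sum_congr rfl fun l hl => (pow_mul _ _ _).symm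
  have hsplit : m * p = m * (p - 1) + m := by
    rw [← Nat.mul_succ]
    congr 1
    omega
  have hQdeg : ∀ k, m ≤ k → Q.coeff k = 0 := by
    intro k hk
    by_cases hQ0 : Q = 0
    · simp [hQ0]
    have hΦ0 : Polynomial.cyclotomic (p ^ n) ℤ ≠ 0 := Polynomial.cyclotomic_ne_zero _ ℤ
    have hP0 : P ≠ 0 := by
      rw [hPQ]; exact mul_ne_zero hΦ0 hQ0
    have hPdeg : P.natDegree < p ^ n := by
      rw [hP]
      have hle := Polynomial.natDegree_sum_le (Finset.range (p ^ n))
        (fun j => C (a j) * X ^ j)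
      refine lt_of_le_of_lt hle ?_
      rw [Finset.fold_max_lt]
      refine ⟨hNpos, fun j hj => ?_⟩
      refine lt_of_le_of_lt (Polynomial.natDegree_C_mul_le _ _) ?_
      simpa using Finset.mem_range.mp hj
    have hmul : P.natDegree = (Polynomial.cyclotomic (p ^ n) ℤ).natDegree + Q.natDegree := by
      rw [hPQ, Polynomial.natDegree_mul hΦ0 hQ0]
    rw [Polynomial.natDegree_cyclotomic, Nat.totient_prime_pow hp (by omega), ← hm] at hmul
    rw [hpn] at hPdeg
    have hQd : Q.natDegree < m := by omega
    exact Polynomial.coeff_eq_zero_of_natDegree_lt (lt_of_lt_of_le hQd hk)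
  have key : ∀ i < m, ∀ j < p, a (i + j * m) = Q.coeff i := by
    intro i hi j hj
    have hlt : i + j * m < p ^ n := by
      rw [hpn, mul_comm m p]
      calc i + j * m < m + j * m := by omega
        _ = (j + 1) * m := by ring
        _ ≤ p * m := Nat.mul_le_mul_right m (by omega)
    rw [← hcoeff _ hlt, hPQ, hcyc, Finset.sum_mul, finset_sum_coeff]
    rw [Finset.sum_eq_single j]
    · rw [mul_comm ((X : ℤ[X]) ^ (m * j)) Q, Polynomial.coeff_mul_X_pow']
      have hc : m * j ≤ i + j * m := by rw [mul_comm m j]; omega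
      rw [if_pos hc]
      congr 1
      rw [mul_comm m j]
      omega
    · intro l hl hlj
      rw [mul_comm ((X : ℤ[X]) ^ (m * l)) Q, Polynomial.coeff_mul_X_pow']
      have heq : j * m = m * j := Nat.mul_comm j m
      rcases lt_or_gt_of_ne hlj with hlt' | hgt'
      · have hmono : m * (l + 1) ≤ m * j := Nat.mul_le_mul_left m hlt'
        rw [Nat.mul_add, Nat.mul_one] at hmono
        have hle : m * l ≤ i + j * m := by omega
        rw [if_pos hle]
        exact hQdeg _ (by omega)
      · have hmono : m * (j + 1) ≤ m * l := Nat.mul_le_mul_left m hgt'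
        rw [Nat.mul_add, Nat.mul_one] at hmono
        rw [if_neg (by omega)]
    · intro hjn
      exact absurd (Finset.mem_range.mpr hj) hjn
  intro i hi j hj
  have h1 := key i hi j hj
  have h2 := key i hi 0 (by omega)
  simp only [Nat.zero_mul, Nat.add_zero] at h2
  rw [h2, h1]
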